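/- Let d_1, …, d_n ∈ k^{t+1} be pairwise non-proportional nonzero vectors with vanishing ideals m_1, …, m_n ⊆ U = k[x_0,…,x_t], whose linear span in k^{t+1} has dimension at least 3 (the corresponding points of P^t do not all lie on a line). Let b_1, b_2 ∈ k^{t+1} be nonzero vectors, each non-proportional to every d_i, with vanishing ideals 𝔫_1, 𝔫_2. If (m_1 ∩ ⋯ ∩ m_n ∩ 𝔫_1)_n = (m_1 ∩ ⋯ ∩ m_n ∩ 𝔫_2)_n — that is, the same homogeneous polynomials of degree n vanish at d_1,…,d_n,b_1 as at d_1,…,d_n,b_2 — then b_1 and b_2 are proportional (they represent the same point of P^t). -/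
import Mathlib


set_option synthInstance.maxHeartbeats 1000000
set_option maxHeartbeats 4000000

noncomputable section

open MvPolynomial Submodule

lemma exists_lin_poly {k : Type*} [Field k] {t : ℕ}
    (φ : Module.Dual k (Fin (t + 1) → k)) :
    ∃ p : MvPolynomial (Fin (t + 1)) k, p.IsHomogeneous 1 ∧
      ∀ v, MvPolynomial.eval v p = φ v := by
  refine ⟨∑ j : Fin (t + 1), MvPolynomial.C (φ (Pi.single j (1:k))) * MvPolynomial.X j, ?_, ?_⟩
  · exact MvPolynomial.IsHomogeneous.sum _ _ 1 fun j _ ↦ isHomogeneous_C_mul_X _ _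
  · intro v
    have h1 : MvPolynomial.eval v
        (∑ j : Fin (t + 1), MvPolynomial.C (φ (Pi.single j (1:k))) * MvPolynomial.X j)
        = ∑ j : Fin (t + 1), φ (Pi.single j (v j)) := by
      rw [map_sum]
      refine Finset.sum_congr rfl fun j _ ↦ ?_
      have : Pi.single j (v j) = v j • (Pi.single j (1:k) : Fin (t+1) → k) := by
        ext i; by_cases hij : i = j <;> simp [hij, Pi.single_apply]
      simp [this, mul_comm]
    rw [h1, ← map_sum, Finset.univ_sum_single]

lemma exists_dual_sep {k : Type*} [Field k] {t : ℕ}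
    (p : Submodule k (Fin (t + 1) → k)) {x : Fin (t + 1) → k} (hx : x ∉ p) :
    ∃ φ : Module.Dual k (Fin (t + 1) → k), φ x ≠ 0 ∧ ∀ y ∈ p, φ y = 0 := by
  obtain ⟨φ, hφx, hφ⟩ := p.exists_dual_map_eq_bot_of_notMem hx inferInstance
  refine ⟨φ, hφx, fun y hy ↦ ?_⟩
  have : φ y ∈ p.map φ := Submodule.mem_map_of_mem hy
  rw [hφ] at this
  simpa using this

/-- for distinct points `d₁, …, d_n` of `ℙ^t` not all on a line, and points
`b₁, b₂` distinct from all the `dᵢ`, if the same homogeneous degree-`n` polynomials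
vanish at `d₁, …, d_n, b₁` as at `d₁, …, d_n, b₂` then `b₁ = b₂` in `ℙ^t`. -/
theorem stmt_11 {k : Type*} [Field k] [IsAlgClosed k]
    (t : ℕ) (ht : 2 ≤ t) (n : ℕ) (d : Fin n → Fin (t + 1) → k)
    (hd0 : ∀ i, d i ≠ 0)
    (hprop : ∀ i j, i ≠ j → ∀ a : k, d i ≠ a • d j)
    (hline : 3 ≤ Module.rank k ↥(Submodule.span k (Set.range d)))
    (b₁ b₂ : Fin (t + 1) → k) (hb₁ : b₁ ≠ 0) (hb₂ : b₂ ≠ 0)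
    (hb₁d : ∀ i, ∀ a : k, b₁ ≠ a • d i)
    (hb₂d : ∀ i, ∀ a : k, b₂ ≠ a • d i)
    (h : ∀ f : MvPolynomial (Fin (t + 1)) k, f.IsHomogeneous n →
      (((∀ i, MvPolynomial.eval (d i) f = 0) ∧ MvPolynomial.eval b₁ f = 0) ↔
       ((∀ i, MvPolynomial.eval (d i) f = 0) ∧ MvPolynomial.eval b₂ f = 0))) :
    ∃ a : k, b₁ = a • b₂ := by
  classical
  by_cases hspan : b₂ ∈ Submodule.span k {b₁}
  · obtain ⟨a, ha⟩ := Submodule.mem_span_singleton.mp hspan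
    have ha0 : a ≠ 0 := by rintro rfl; rw [zero_smul] at ha; exact hb₂ ha.symm
    exact ⟨a⁻¹, by rw [← ha, smul_smul, inv_mul_cancel₀ ha0, one_smul]⟩
  exfalso
  -- find i₀ with b₂ ∉ span {d i₀, b₁}
  have hex : ∃ i₀, b₂ ∉ Submodule.span k {d i₀, b₁} := by
    by_contra hc
    push_neg at hc
    have hdmem : ∀ i, d i ∈ Submodule.span k ({b₁, b₂} : Set (Fin (t+1) → k)) := by
      intro i
      obtain ⟨c, e, hce⟩ := Submodule.mem_span_pair.mp (hc i)
      have hc0 : c ≠ 0 := by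
        rintro rfl
        rw [zero_smul, zero_add] at hce
        exact hspan (Submodule.mem_span_singleton.mpr ⟨e, hce⟩)
      have hdi : d i = c⁻¹ • b₂ - (c⁻¹ * e) • b₁ := by
        have h1 : c • d i = b₂ - e • b₁ := eq_sub_of_add_eq hce
        have := congrArg (fun z => c⁻¹ • z) h1
        simpa [smul_smul, inv_mul_cancel₀ hc0, smul_sub, mul_comm] using this
      rw [hdi]
      exact Submodule.sub_mem _
        (Submodule.smul_mem _ _ (Submodule.subset_span (by simp)))
        (Submodule.smul_mem _ _ (Submodule.subset_span (by simp)))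
    have hle : Submodule.span k (Set.range d) ≤ Submodule.span k {b₁, b₂} :=
      Submodule.span_le.mpr (by rintro _ ⟨i, rfl⟩; exact hdmem i)
    have h2 : Module.rank k ↥(Submodule.span k ({b₁, b₂} : Set (Fin (t+1) → k))) ≤ 2 := by
      refine (rank_span_le _).trans ?_
      have := (Cardinal.mk_insert_le (s := ({b₂} : Set (Fin (t+1) → k))) (a := b₁))
      refine this.trans ?_
      simp
      norm_num
    have h3 := (hline.trans (Submodule.rank_mono hle)).trans h2
    norm_num at h3
  obtain ⟨i₀, hi₀⟩ := hex
  obtain ⟨φ₀, hφ₀b₂, hφ₀⟩ := exists_dual_sep _ hi₀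
  have hnot : ∀ i, b₂ ∉ Submodule.span k {d i} := by
    intro i hmem
    obtain ⟨a, ha⟩ := Submodule.mem_span_singleton.mp hmem
    exact hb₂d i a ha.symm
  choose ψ hψb₂ hψz using fun i => exists_dual_sep (Submodule.span k {d i}) (hnot i)
  set Φ : Fin n → Module.Dual k (Fin (t+1) → k) := fun i => if i = i₀ then φ₀ else ψ i with hΦ
  choose p hph hpe using fun i => exists_lin_poly (Φ i)
  set f := ∏ i, p i with hfdef
  have hf : f.IsHomogeneous n := by
    have := MvPolynomial.IsHomogeneous.prod Finset.univ p (fun _ => 1) fun i _ => hph i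
    simpa using this
  have hevald : ∀ i, MvPolynomial.eval (d i) f = 0 := by
    intro i
    rw [hfdef, map_prod]
    apply Finset.prod_eq_zero (Finset.mem_univ i)
    rw [hpe i]
    by_cases hii : i = i₀
    · subst hii
      simp only [hΦ, if_pos rfl]
      exact hφ₀ _ (Submodule.subset_span (by simp))
    · simp only [hΦ, if_neg hii]
      exact hψz i _ (Submodule.mem_span_singleton_self _)
  have hevalb₁ : MvPolynomial.eval b₁ f = 0 := by
    rw [hfdef, map_prod]
    apply Finset.prod_eq_zero (Finset.mem_univ i₀)
    rw [hpe i₀]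
    simp only [hΦ, if_pos rfl]
    exact hφ₀ _ (Submodule.subset_span (by simp))
  have hevalb₂ : MvPolynomial.eval b₂ f ≠ 0 := by
    rw [hfdef, map_prod]
    refine Finset.prod_ne_zero_iff.mpr fun i _ => ?_
    rw [hpe i]
    by_cases hii : i = i₀
    · simpa [hΦ, hii] using hφ₀b₂
    · simpa [hΦ, hii] using hψb₂ i
  exact hevalb₂ ((h f hf).mp ⟨hevald, hevalb₁⟩).2
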